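/- Let (G,H) be an instance of the nonuniform sparsest cut problem on a finite vertex set V where H is a rank-1 graph with H̄(u,v) = μ(u)·μ(v) for a probability distribution μ. Let {x_v}_{v∈V} be a feasible solution to the Goemans–Linial relaxation for (G,H) of cost ε. Suppose there exists z ∈ V such that the ball B = {v : ‖x_z − x_v‖² ≤ 1/4} satisfies μ(B) ≥ 1/2. Then there exists a cut S ⊆ V with H̄(S) > 0 and sparsity σ(G,H;S) ≤ 8ε. -/

import Mathlib

/-- Total weight (over ordered pairs) of a weighted graph. -/
noncomputable def total {V : Type*} [Fintype V] (G : V → V → ℝ) : ℝ := ∑ u, ∑ v, G u v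

/-- Weight of the edges of `G` crossing the cut `(S, V \ S)` (over ordered pairs). -/
noncomputable def cutval {V : Type*} [Fintype V] [DecidableEq V] (G : V → V → ℝ) (S : Finset V) : ℝ :=
  ∑ u, ∑ v, G u v * |(if u ∈ S then (1 : ℝ) else 0) - (if v ∈ S then (1 : ℝ) else 0)|

/-- Normalized cut weight `Ḡ(S)`. -/
noncomputable def ncut {V : Type*} [Fintype V] [DecidableEq V] (G : V → V → ℝ) (S : Finset V) : ℝ :=
  cutval G S / total G

open MeasureTheory

lemma stepfun_eq (a b : ℝ) :
    (fun t : ℝ => |(if a ≤ t then (1:ℝ) else 0) - (if b ≤ t then 1 else 0)|)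
      = Set.indicator (Set.Ico (min a b) (max a b)) (fun _ => (1:ℝ)) := by
  funext t
  simp only [Set.indicator_apply, Set.mem_Ico, min_le_iff, lt_max_iff]
  by_cases h1 : a ≤ t <;> by_cases h2 : b ≤ t <;> simp [h1, h2] <;> split_ifs with h <;>
      (try rfl) <;> (try push_neg at h) <;> exfalso

lemma stepfun_integrable (a b : ℝ) :
    Integrable (fun t : ℝ => |(if a ≤ t then (1:ℝ) else 0) - (if b ≤ t then 1 else 0)|) := by
  rw [stepfun_eq]
  exact (integrable_indicator_iff measurableSet_Ico).2
    (integrableOn_const measure_Ico_lt_top.ne)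

lemma stepfun_integral (a b : ℝ) :
    ∫ t : ℝ, |(if a ≤ t then (1:ℝ) else 0) - (if b ≤ t then 1 else 0)| = |a - b| := by
  rw [stepfun_eq, integral_indicator measurableSet_Ico]
  simp [Real.volume_Ico, ENNReal.toReal_ofReal (sub_nonneg.2 (min_le_max (a := a) (b := b)))]
  rw [max_sub_min_eq_abs, abs_sub_comm]


/-- Rounding the Goemans–Linial relaxation when a large measure of points is bunched up in a
small ball: if `H` is rank-1 with `H̄(u,v) = μ(u)μ(v)`, `{x_v}` is a feasible solution of
cost `ε`, and some ball `B = {v : ‖x_z − x_v‖² ≤ 1/4}` has `μ(B) ≥ 1/2`, then there is a cut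
of sparsity at most `8ε`. -/
theorem round_goemans_linial_ball {V : Type*} [Fintype V] [DecidableEq V]
    (G H : V → V → ℝ) (μ : V → ℝ) (ε : ℝ) (d : ℕ) (x : V → EuclideanSpace ℝ (Fin d))
    (hd : 1 ≤ d)
    (hGsymm : ∀ u v, G u v = G v u) (hGnonneg : ∀ u v, 0 ≤ G u v)
    (hHsymm : ∀ u v, H u v = H v u) (hHnonneg : ∀ u v, 0 ≤ H u v)
    (hGtot : 0 < total G) (hHtot : 0 < total H)
    (hμnonneg : ∀ v, 0 ≤ μ v) (hμsum : ∑ v, μ v = 1)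
    (hrank1 : ∀ u v, H u v / total H = μ u * μ v)
    (htri : ∀ u v w : V, ‖x u - x w‖ ^ 2 ≤ ‖x u - x v‖ ^ 2 + ‖x v - x w‖ ^ 2)
    (hnorm : ∑ u, ∑ v, μ u * μ v * ‖x u - x v‖ ^ 2 = 1)
    (hcost : ∑ u, ∑ v, (G u v / total G) * ‖x u - x v‖ ^ 2 = ε)
    (z : V) (hball : (1 : ℝ) / 2 ≤ ∑ v with ‖x z - x v‖ ^ 2 ≤ 1 / 4, μ v) :
    ∃ S : Finset V, 0 < ncut H S ∧ ncut G S / ncut H S ≤ 8 * ε := by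

  classical
  set φ : V → ℝ := fun v => ‖x z - x v‖ ^ 2 with hφdef
  -- triangle inequality facts
  have htri2 : ∀ u v, |φ u - φ v| ≤ ‖x u - x v‖ ^ 2 := by
    intro u v
    rw [abs_sub_le_iff]
    constructor
    · have h := htri z v u
      rw [show ‖x v - x u‖ = ‖x u - x v‖ from norm_sub_rev _ _] at h
      simp only [hφdef]; linarith
    · have h := htri z u v
      simp only [hφdef]; linarith
  have htri3 : ∀ u v, ‖x u - x v‖ ^ 2 ≤ φ u + φ v := by
    intro u v
    have h := htri u z v
    rw [show ‖x u - x z‖ = ‖x z - x u‖ from norm_sub_rev _ _] at h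
    simp only [hφdef]; linarith
  have hε : 0 ≤ ε := by
    rw [← hcost]
    refine Finset.sum_nonneg fun u _ => Finset.sum_nonneg fun v _ => ?_
    have := hGnonneg u v
    positivity
  -- the threshold cuts
  set Scut : ℝ → Finset V := fun t => Finset.univ.filter (fun v => φ v ≤ t) with hScut
  have hcutval : ∀ (W : V → V → ℝ) (t : ℝ), cutval W (Scut t)
      = ∑ u, ∑ v, W u v * |(if φ u ≤ t then (1:ℝ) else 0) - (if φ v ≤ t then 1 else 0)| := by
    intro W t
    simp [cutval, hScut, Finset.mem_filter]
  have hint : ∀ (W : V → V → ℝ), Integrable (fun t => cutval W (Scut t)) := by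
    intro W
    have : (fun t => cutval W (Scut t)) = fun t =>
        ∑ u, ∑ v, W u v * |(if φ u ≤ t then (1:ℝ) else 0) - (if φ v ≤ t then 1 else 0)| := by
      funext t; exact hcutval W t
    rw [this]
    refine integrable_finset_sum _ fun u _ => integrable_finset_sum _ fun v _ => ?_
    exact (stepfun_integrable (φ u) (φ v)).const_mul _
  have hintegral : ∀ (W : V → V → ℝ),
      ∫ t, cutval W (Scut t) = ∑ u, ∑ v, W u v * |φ u - φ v| := by
    intro W
    have h1 : (fun t => cutval W (Scut t)) = fun t =>
        ∑ u, ∑ v, W u v * |(if φ u ≤ t then (1:ℝ) else 0) - (if φ v ≤ t then 1 else 0)| := by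
      funext t; exact hcutval W t
    rw [h1, integral_finset_sum _ fun u _ =>
      integrable_finset_sum _ fun v _ => (stepfun_integrable (φ u) (φ v)).const_mul _]
    refine Finset.sum_congr rfl fun u _ => ?_
    rw [integral_finset_sum _ fun v _ => (stepfun_integrable (φ u) (φ v)).const_mul _]
    refine Finset.sum_congr rfl fun v _ => ?_
    rw [integral_const_mul, stepfun_integral]
  -- bound for G
  have hG : ∑ u, ∑ v, G u v * |φ u - φ v| ≤ ε * total G := by
    have h1 : ∑ u, ∑ v, G u v * |φ u - φ v| ≤ ∑ u, ∑ v, G u v * ‖x u - x v‖ ^ 2 := by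
      refine Finset.sum_le_sum fun u _ => Finset.sum_le_sum fun v _ =>
        mul_le_mul_of_nonneg_left (htri2 u v) (hGnonneg u v)
    have h2 : ∑ u, ∑ v, G u v * ‖x u - x v‖ ^ 2 = ε * total G := by
      rw [← hcost, Finset.sum_mul]
      refine Finset.sum_congr rfl fun u _ => ?_
      rw [Finset.sum_mul]
      refine Finset.sum_congr rfl fun v _ => ?_
      field_simp
    linarith
  -- rank-1 structure of H
  have hH' : ∀ u v, H u v = total H * (μ u * μ v) := by
    intro u v
    rw [← hrank1 u v]
    field_simp
  -- D ≥ 1/2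
  have hD : (1:ℝ)/2 ≤ ∑ v, μ v * φ v := by
    have h1 : (1:ℝ) ≤ ∑ u, ∑ v, μ u * μ v * (φ u + φ v) := by
      rw [← hnorm]
      refine Finset.sum_le_sum fun u _ => Finset.sum_le_sum fun v _ =>
        mul_le_mul_of_nonneg_left (htri3 u v) (mul_nonneg (hμnonneg u) (hμnonneg v))
    have h2 : ∑ u, ∑ v, μ u * μ v * (φ u + φ v) = 2 * ∑ v, μ v * φ v := by
      have inner : ∀ u : V, ∑ v, μ u * μ v * (φ u + φ v)
          = μ u * φ u + μ u * ∑ v, μ v * φ v := by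
        intro u
        rw [Finset.sum_congr rfl fun v _ => show μ u * μ v * (φ u + φ v)
          = μ u * φ u * μ v + μ u * (μ v * φ v) from by ring,
          Finset.sum_add_distrib, ← Finset.mul_sum, ← Finset.mul_sum, hμsum, mul_one]
      rw [Finset.sum_congr rfl fun u _ => inner u, Finset.sum_add_distrib,
        ← Finset.sum_mul, hμsum]
      ring
    linarith
  -- the key 1/8 lower bound
  have hkey : (1:ℝ)/8 ≤ ∑ u, ∑ v, μ u * μ v * |φ u - φ v| := by
    set B : Finset V := Finset.univ.filter (fun v => φ v ≤ 1/4) with hB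
    have hsub : ∑ u ∈ B, ∑ v, μ u * μ v * |φ u - φ v|
        ≤ ∑ u, ∑ v, μ u * μ v * |φ u - φ v| := by
      refine Finset.sum_le_sum_of_subset_of_nonneg (Finset.filter_subset _ _) fun u _ _ =>
        Finset.sum_nonneg fun v _ => ?_
      have := hμnonneg u; have := hμnonneg v; positivity
    have hlow : ∑ u ∈ B, μ u * (1/4) ≤ ∑ u ∈ B, ∑ v, μ u * μ v * |φ u - φ v| := by
      refine Finset.sum_le_sum fun u hu => ?_
      have huB : φ u ≤ 1/4 := by
        simp only [hB, Finset.mem_filter] at hu; exact hu.2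
      have step1 : ∑ v, μ u * μ v * (φ v - φ u) ≤ ∑ v, μ u * μ v * |φ u - φ v| := by
        refine Finset.sum_le_sum fun v _ => ?_
        refine mul_le_mul_of_nonneg_left ?_ (mul_nonneg (hμnonneg u) (hμnonneg v))
        rw [abs_sub_comm]
        exact le_abs_self _
      have step2 : ∑ v, μ u * μ v * (φ v - φ u)
          = μ u * ((∑ v, μ v * φ v) - φ u) := by
        rw [Finset.sum_congr rfl fun v _ => show μ u * μ v * (φ v - φ u)
          = μ u * (μ v * φ v) - μ u * φ u * μ v from by ring,
          Finset.sum_sub_distrib, ← Finset.mul_sum, ← Finset.mul_sum, hμsum, mul_one]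
        ring
      have step3 : μ u * (1/4) ≤ μ u * ((∑ v, μ v * φ v) - φ u) := by
        refine mul_le_mul_of_nonneg_left ?_ (hμnonneg u)
        linarith
      linarith [step1, step2 ▸ step3]
    have hμB : (1:ℝ)/2 ≤ ∑ u ∈ B, μ u := hball
    have : (1:ℝ)/8 ≤ ∑ u ∈ B, μ u * (1/4) := by
      rw [← Finset.sum_mul]
      nlinarith
    linarith
  have hHlow : total H * (1/8) ≤ ∑ u, ∑ v, H u v * |φ u - φ v| := by
    have h2 : ∑ u, ∑ v, H u v * |φ u - φ v|
        = total H * ∑ u, ∑ v, μ u * μ v * |φ u - φ v| := by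
      rw [Finset.mul_sum]
      refine Finset.sum_congr rfl fun u _ => ?_
      rw [Finset.mul_sum]
      refine Finset.sum_congr rfl fun v _ => by rw [hH' u v]; ring
    rw [h2]
    exact mul_le_mul_of_nonneg_left hkey (le_of_lt hHtot) |>.trans_eq' (by ring) |>.trans_eq (by ring)
  -- nonnegativity of cutvals
  have hcvnonneg : ∀ (W : V → V → ℝ), (∀ u v, 0 ≤ W u v) → ∀ S : Finset V, 0 ≤ cutval W S := by
    intro W hW S
    refine Finset.sum_nonneg fun u _ => Finset.sum_nonneg fun v _ => ?_
    have := hW u v; positivity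
  by_contra hcon
  push_neg at hcon
  -- hcon : ∀ S, 0 < ncut H S → 8 * ε < ncut G S / ncut H S
  have hstrict : ∀ t : ℝ, cutval H (Scut t) ≠ 0 →
      8 * ε * total G * cutval H (Scut t) < total H * cutval G (Scut t) := by
    intro t hne
    have hpos : 0 < cutval H (Scut t) := (hcvnonneg H hHnonneg _).lt_of_ne (Ne.symm hne)
    have hn : 0 < ncut H (Scut t) := div_pos hpos hHtot
    have := hcon (Scut t) hn
    rw [lt_div_iff₀ hn] at this
    rw [ncut, ncut, mul_div_assoc'] at this
    rw [div_lt_div_iff₀ hHtot hGtot] at this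
    nlinarith [this]
  set f : ℝ → ℝ := fun t => total H * cutval G (Scut t) - 8 * ε * total G * cutval H (Scut t)
    with hf
  have hf_int : Integrable f := ((hint G).const_mul _).sub ((hint H).const_mul _)
  have hf_nonneg : ∀ t, 0 ≤ f t := by
    intro t
    by_cases hz0 : cutval H (Scut t) = 0
    · have : 0 ≤ total H * cutval G (Scut t) :=
        mul_nonneg (le_of_lt hHtot) (hcvnonneg G hGnonneg _)
      simp [hf, hz0]; linarith
    · have := hstrict t hz0
      simp only [hf]; linarith
  have hIf_le : ∫ t, f t ≤ 0 := by
    have hsplit : ∫ t, f t = total H * (∑ u, ∑ v, G u v * |φ u - φ v|)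
        - 8 * ε * total G * (∑ u, ∑ v, H u v * |φ u - φ v|) := by
      rw [hf, integral_sub ((hint G).const_mul _) ((hint H).const_mul _),
        integral_const_mul, integral_const_mul, hintegral, hintegral]
    rw [hsplit]
    have h1 : total H * (∑ u, ∑ v, G u v * |φ u - φ v|) ≤ total H * (ε * total G) :=
      mul_le_mul_of_nonneg_left hG (le_of_lt hHtot)
    have h2 : 8 * ε * total G * (total H * (1/8)) ≤
        8 * ε * total G * (∑ u, ∑ v, H u v * |φ u - φ v|) := by
      refine mul_le_mul_of_nonneg_left hHlow ?_
      positivity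
    nlinarith [h1, h2]
  have hIf0 : ∫ t, f t = 0 := le_antisymm hIf_le (integral_nonneg hf_nonneg)
  have hfae : f =ᵐ[volume] 0 := (integral_eq_zero_iff_of_nonneg hf_nonneg hf_int).1 hIf0
  have hHne : ¬ ((fun t => cutval H (Scut t)) =ᵐ[volume] (0 : ℝ → ℝ)) := by
    intro hae
    have h0 : ∫ t, cutval H (Scut t) = 0 := by
      rw [integral_congr_ae hae]; simp
    rw [hintegral] at h0
    nlinarith [hHlow, hHtot]
  apply hHne
  refine hfae.mono fun t ht => ?_
  simp only [Pi.zero_apply] at ht ⊢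
  by_contra hne
  have := hstrict t hne
  simp only [hf] at ht
  linarith
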